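/- If y is obtained from x by a balancing step with pair set Ē, then Σ_{i=1}^n (L_i/2)(y_i − x_i)² ≤ Σ_{{i,j} ∈ Ē} (f_i'(x_i) − f_j'(x_j))² / (4(L_i + L_j)). -/

import Mathlib

/-- A balancing step from state `x` to state `y`, specified by a finite set `E` of
unordered pairs of distinct nodes such that: (i) the derivatives of the two endpoints
of each pair differ; (ii) every node belongs to at most one pair in which its
derivative is the strictly larger of the two, and at most one pair in which its
derivative is the strictly smaller of the two; and
`y i = x i − Σ_{j : {i,j} ∈ E} (f_i'(x_i) − f_j'(x_j)) / (2(L_i + L_j))`. -/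
def IsBalancingStep (n : ℕ) (f' : Fin n → ℝ → ℝ) (L : Fin n → ℝ)
    (x y : Fin n → ℝ) (E : Finset (Sym2 (Fin n))) : Prop :=
  (∀ i j : Fin n, s(i, j) ∈ E → f' i (x i) ≠ f' j (x j)) ∧
  (∀ i : Fin n,
    (Finset.univ.filter fun j => s(i, j) ∈ E ∧ f' j (x j) < f' i (x i)).card ≤ 1) ∧
  (∀ i : Fin n,
    (Finset.univ.filter fun j => s(i, j) ∈ E ∧ f' i (x i) < f' j (x j)).card ≤ 1) ∧
  (∀ i : Fin n, y i = x i - ∑ j ∈ Finset.univ.filter (fun j => s(i, j) ∈ E),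
      (f' i (x i) - f' j (x j)) / (2 * (L i + L j)))


lemma sum_lift_pairs (n : ℕ) (E : Finset (Sym2 (Fin n))) (g : Fin n → Fin n → ℝ)
    (hE : ∀ e ∈ E, ¬ e.IsDiag) :
    ∑ e ∈ E, Sym2.lift ⟨fun i j => g i j + g j i, by intro a b; ring⟩ e
      = ∑ i, ∑ j ∈ Finset.univ.filter (fun j => s(i, j) ∈ E), g i j := by
  classical
  induction E using Finset.induction_on with
  | empty => simp
  | @insert e E' hnot ih =>
    obtain ⟨a, b⟩ := e
    have hab : a ≠ b := by
      have := hE s(a, b) (Finset.mem_insert_self _ _)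
      simpa [Sym2.isDiag_iff_proj_eq] using this
    have hE' : ∀ e ∈ E', ¬ e.IsDiag := fun e he => hE e (Finset.mem_insert_of_mem he)
    rw [Finset.sum_insert hnot, ih hE', Sym2.lift_mk]
    -- For each i, new inner sum vs old inner sum
    have key : ∀ i : Fin n,
        (∑ j ∈ Finset.univ.filter (fun j => s(i, j) ∈ insert s(a, b) E'), g i j)
          = (∑ j ∈ Finset.univ.filter (fun j => s(i, j) ∈ E'), g i j)
            + (if i = a then g a b else 0) + (if i = b then g b a else 0) := by
      intro i
      by_cases hia : i = a
      · subst hia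
        have hset : Finset.univ.filter (fun j => s(i, j) ∈ insert s(i, b) E')
            = insert b (Finset.univ.filter (fun j => s(i, j) ∈ E')) := by
          ext j
          simp only [Finset.mem_filter, Finset.mem_univ, true_and, Finset.mem_insert,
            Sym2.eq_iff]
          tauto
        have hbnot : b ∉ Finset.univ.filter (fun j => s(i, j) ∈ E') := by
          simp only [Finset.mem_filter, Finset.mem_univ, true_and]
          exact hnot
        rw [hset, Finset.sum_insert hbnot, if_pos rfl, if_neg hab]
        ring
      · by_cases hib : i = b
        · subst hib
          have hset : Finset.univ.filter (fun j => s(i, j) ∈ insert s(a, i) E')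
              = insert a (Finset.univ.filter (fun j => s(i, j) ∈ E')) := by
            ext j
            simp only [Finset.mem_filter, Finset.mem_univ, true_and, Finset.mem_insert,
              Sym2.eq_iff]
            tauto
          have hanot : a ∉ Finset.univ.filter (fun j => s(i, j) ∈ E') := by
            simp only [Finset.mem_filter, Finset.mem_univ, true_and]
            intro h
            exact hnot (by rwa [Sym2.eq_swap] at h)
          rw [hset, Finset.sum_insert hanot, if_pos rfl, if_neg hia]
          ring
        · have hset : Finset.univ.filter (fun j => s(i, j) ∈ insert s(a, b) E')
              = Finset.univ.filter (fun j => s(i, j) ∈ E') := by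
            ext j
            simp only [Finset.mem_filter, Finset.mem_univ, true_and, Finset.mem_insert,
              Sym2.eq_iff]
            tauto
          rw [hset, if_neg hia, if_neg hib]
          ring
    calc g a b + g b a + ∑ i, ∑ j ∈ Finset.univ.filter (fun j => s(i, j) ∈ E'), g i j
        = ∑ i, ((∑ j ∈ Finset.univ.filter (fun j => s(i, j) ∈ E'), g i j)
            + (if i = a then g a b else 0) + (if i = b then g b a else 0)) := by
          rw [Finset.sum_add_distrib, Finset.sum_add_distrib,
            Finset.sum_ite_eq' Finset.univ a (fun _ => g a b),
            Finset.sum_ite_eq' Finset.univ b (fun _ => g b a)]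
          simp
          ring
      _ = _ := by
          exact (Finset.sum_congr rfl fun i _ => (key i)).symm

/-- If y is obtained from x by a balancing step with pair set E, then
Σ_i (L_i/2)(y_i − x_i)² ≤ Σ_{{i,j} ∈ E} (f_i'(x_i) − f_j'(x_j))² / (4(L_i + L_j)). -/
theorem stmt_7 (n : ℕ) (hn : 0 < n) (f f' : Fin n → ℝ → ℝ) (L : Fin n → ℝ)
    (hL : ∀ i, 0 < L i)
    (hconv : ∀ i, ConvexOn ℝ Set.univ (f i))
    (hderiv : ∀ i t, HasDerivAt (f i) (f' i t) t)
    (hlip : ∀ i, ∀ a b : ℝ, |f' i a - f' i b| ≤ L i * |a - b|)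
    (x y : Fin n → ℝ) (E : Finset (Sym2 (Fin n)))
    (hstep : IsBalancingStep n f' L x y E) :
    ∑ i, L i / 2 * (y i - x i) ^ 2 ≤
      ∑ e ∈ E, Sym2.lift
        ⟨fun i j => (f' i (x i) - f' j (x j)) ^ 2 / (4 * (L i + L j)),
          by intro a b; ring_nf⟩ e := by
  classical
  obtain ⟨hdiff, hlt, hgt, hy⟩ := hstep
  set a : Fin n → Fin n → ℝ :=
    fun i j => (f' i (x i) - f' j (x j)) / (2 * (L i + L j)) with ha
  set g : Fin n → Fin n → ℝ := fun i j => L i * (a i j) ^ 2 with hg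
  have hne : ∀ e ∈ E, ¬ e.IsDiag := by
    intro e he
    induction e using Sym2.ind with
    | _ i j =>
      rw [Sym2.mk_isDiag_iff]
      exact fun hij => hdiff i j he (by rw [hij])
  have step1 : ∀ i, L i / 2 * (y i - x i) ^ 2
      ≤ ∑ j ∈ Finset.univ.filter (fun j => s(i, j) ∈ E), g i j := by
    intro i
    set S := Finset.univ.filter (fun j => s(i, j) ∈ E) with hS
    have hcard : S.card ≤ 2 := by
      have hsub : S ⊆ (Finset.univ.filter fun j => s(i, j) ∈ E ∧ f' j (x j) < f' i (x i))
          ∪ (Finset.univ.filter fun j => s(i, j) ∈ E ∧ f' i (x i) < f' j (x j)) := by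
        intro j hj
        simp only [hS, Finset.mem_filter, Finset.mem_univ, true_and] at hj
        rcases lt_or_gt_of_ne (hdiff i j hj) with h | h
        · exact Finset.mem_union_right _ (by simp [hj, h])
        · exact Finset.mem_union_left _ (by simp [hj, h])
      calc S.card ≤ _ := Finset.card_le_card hsub
        _ ≤ _ + _ := Finset.card_union_le _ _
        _ ≤ 1 + 1 := Nat.add_le_add (hlt i) (hgt i)
    have hsq : (y i - x i) ^ 2 = (∑ j ∈ S, a i j) ^ 2 := by
      rw [hy i]; ring
    have hCS : (∑ j ∈ S, a i j) ^ 2 ≤ (S.card : ℝ) * ∑ j ∈ S, (a i j) ^ 2 :=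
      sq_sum_le_card_mul_sum_sq
    have hsum_sq : (0:ℝ) ≤ ∑ j ∈ S, (a i j) ^ 2 :=
      Finset.sum_nonneg fun j _ => sq_nonneg _
    calc L i / 2 * (y i - x i) ^ 2
        = L i / 2 * (∑ j ∈ S, a i j) ^ 2 := by rw [hsq]
      _ ≤ L i / 2 * ((S.card : ℝ) * ∑ j ∈ S, (a i j) ^ 2) :=
          mul_le_mul_of_nonneg_left hCS (div_nonneg (hL i).le (by norm_num))
      _ ≤ L i / 2 * (2 * ∑ j ∈ S, (a i j) ^ 2) := by
          apply mul_le_mul_of_nonneg_left _ (div_nonneg (hL i).le (by norm_num))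
          exact mul_le_mul_of_nonneg_right (by exact_mod_cast hcard) hsum_sq
      _ = ∑ j ∈ S, g i j := by
          rw [Finset.mul_sum, Finset.mul_sum]
          refine Finset.sum_congr rfl fun j _ => ?_
          simp only [hg]
          ring
  calc ∑ i, L i / 2 * (y i - x i) ^ 2
      ≤ ∑ i, ∑ j ∈ Finset.univ.filter (fun j => s(i, j) ∈ E), g i j :=
        Finset.sum_le_sum fun i _ => step1 i
    _ = ∑ e ∈ E, Sym2.lift ⟨fun i j => g i j + g j i, by intro a b; ring⟩ e :=
        (sum_lift_pairs n E g hne).symm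
    _ = _ := by
        refine Finset.sum_congr rfl fun e he => ?_
        induction e using Sym2.ind with
        | _ i j =>
          rw [Sym2.lift_mk, Sym2.lift_mk]
          simp only [hg, ha]
          have h1 : L i + L j ≠ 0 := (add_pos (hL i) (hL j)).ne'
          have h2 : L j + L i ≠ 0 := (add_pos (hL j) (hL i)).ne'
          field_simp
          ring
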